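/- Let μ ∈ (1,2) and n ≥ 1, and suppose f^i(1/2) ≠ 1/2 for every i = 1,…,2n−1. Then there exist an integer k ∈ {n+1,…,2n}, a bit b ∈ {0,1}, and a word w ∈ L_k with T(w) = I_k such that wb ∈ L_{k+1} and T(wb) = Ī_{k'+1} for some integer k' with 1 ≤ k' ≤ k/2. -/

import Mathlib

open Set MeasureTheory

/-- The tent map `f(x) = μx` for `x ≤ 1/2` and `μ(1-x)` for `x ≥ 1/2`. -/
noncomputable def tentMap (μ : ℝ) (x : ℝ) : ℝ :=
  if x ≤ 1/2 then μ * x else μ * (1 - x)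

/-- `tentBit μ x k` is the `(k+1)`-st bit `b_{k+1}` of the tent code of `x`. -/
noncomputable def tentBit (μ x : ℝ) : ℕ → Bool
  | 0 => if 1/2 ≤ x then true else false
  | k + 1 =>
    if (tentMap μ)^[k+1] x < 1/2 then tentBit μ x k
    else if 1/2 < (tentMap μ)^[k+1] x then !(tentBit μ x k)
    else true

/-- The tent code `γ^n(x) = b_1 ⋯ b_n`. -/
noncomputable def tentCode (μ : ℝ) (n : ℕ) (x : ℝ) : List Bool :=
  (List.range n).map (tentBit μ x)

/-- The tent language `L_n = {γ^n(x) : x ∈ [0,1)}`. -/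
def tentLang (μ : ℝ) (n : ℕ) : Set (List Bool) :=
  {w | ∃ x ∈ Set.Ico (0:ℝ) 1, tentCode μ n x = w}

/-- The segment-type `T(w) = {f^n(x) : x ∈ [0,1), γ^n(x) = w}`. -/
def segType (μ : ℝ) (n : ℕ) (w : List Bool) : Set ℝ :=
  {y | ∃ x ∈ Set.Ico (0:ℝ) 1, tentCode μ n x = w ∧ (tentMap μ)^[n] x = y}

/-- The set of segment-types `𝒯_n = {T(w) : w ∈ L_n}`. -/
def typeSet (μ : ℝ) (n : ℕ) : Set (Set ℝ) :=
  {S | ∃ w ∈ tentLang μ n, segType μ n w = S}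

/-- `I_i = T(γ^i(1/2))`. -/
noncomputable def Iseg (μ : ℝ) (i : ℕ) : Set ℝ :=
  segType μ i (tentCode μ i (1/2))

/-- `Ī_i = T(c̄_i)` where `c̄_i` is the bitwise complement of `γ^i(1/2)`. -/
noncomputable def Isegbar (μ : ℝ) (i : ℕ) : Set ℝ :=
  segType μ i ((tentCode μ i (1/2)).map (fun b => !b))

/-- The length of the interval `T(w)` (zero if `T(w)` is empty). -/
noncomputable def segLen (μ : ℝ) (n : ℕ) (w : List Bool) : ℝ :=
  (MeasureTheory.volume (segType μ n w)).toReal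

section Everything
attribute [local instance 10] Classical.propDecidable
section Chunk1

variable {μ : ℝ}

lemma tent_le {x : ℝ} (hx : x ≤ 1/2) : tentMap μ x = μ * x := if_pos hx

lemma tent_ge {x : ℝ} (hx : 1/2 ≤ x) : tentMap μ x = μ * (1 - x) := by
  unfold tentMap
  rcases lt_or_eq_of_le hx with h | h
  · rw [if_neg (by linarith)]
  · rw [← h, if_pos le_rfl]; ring_nf

lemma tent_mirror (x : ℝ) : tentMap μ (1 - x) = tentMap μ x := by
  unfold tentMap
  split_ifs with h1 h2 h2
  · have : x = (1:ℝ)/2 := by linarith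
    subst this; ring_nf
  · ring_nf
  · ring_nf
  · linarith

lemma iter_mirror {m : ℕ} (hm : 1 ≤ m) (x : ℝ) :
    (tentMap μ)^[m] (1 - x) = (tentMap μ)^[m] x := by
  obtain ⟨m, rfl⟩ := Nat.exists_eq_add_of_le hm
  rw [add_comm, Function.iterate_succ_apply, Function.iterate_succ_apply, tent_mirror]

lemma tent_mem01 (hμ1 : 1 < μ) (hμ2 : μ < 2) {x : ℝ} (hx : x ∈ Icc (0:ℝ) 1) :
    tentMap μ x ∈ Icc (0:ℝ) 1 := by
  obtain ⟨h0, h1⟩ := hx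
  unfold tentMap
  split_ifs with h <;> constructor <;> nlinarith

lemma iter_mem01 (hμ1 : 1 < μ) (hμ2 : μ < 2) {x : ℝ} (hx : x ∈ Icc (0:ℝ) 1) (m : ℕ) :
    (tentMap μ)^[m] x ∈ Icc (0:ℝ) 1 := by
  induction m with
  | zero => simpa using hx
  | succ m ih => rw [Function.iterate_succ_apply']; exact tent_mem01 hμ1 hμ2 ih

end Chunk1

noncomputable def rr (μ : ℝ) : ℕ → ℝ
  | 0 => 1
  | 1 => 1
  | (k+2) =>
    if ((tentMap μ)^[k+1] (1/2) - 1/2) * ((tentMap μ)^[k+1] (rr μ (k+1)) - 1/2) < 0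
    then 1/2 + (rr μ (k+1) - 1/2) * (1/2 - (tentMap μ)^[k+1] (1/2)) /
          ((tentMap μ)^[k+1] (rr μ (k+1)) - (tentMap μ)^[k+1] (1/2))
    else rr μ (k+1)

def Cut (μ : ℝ) (k : ℕ) : Prop :=
  ((tentMap μ)^[k] (1/2) - 1/2) * ((tentMap μ)^[k] (rr μ k) - 1/2) < 0

noncomputable def yy (μ : ℝ) (k : ℕ) : ℝ :=
  1/2 + (rr μ k - 1/2) * (1/2 - (tentMap μ)^[k] (1/2)) /
    ((tentMap μ)^[k] (rr μ k) - (tentMap μ)^[k] (1/2))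

noncomputable def lc (μ : ℝ) : ℕ → ℕ
  | 0 => 0
  | (k+1) => if Cut μ (k+1) then (k+1) else lc μ k

lemma rr_succ (μ : ℝ) {k : ℕ} (hk : 1 ≤ k) :
    rr μ (k+1) = if Cut μ k then yy μ k else rr μ k := by
  obtain ⟨m, rfl⟩ := Nat.exists_eq_add_of_le hk
  rw [add_comm 1 m]
  show rr μ (m+2) = _
  rw [rr]
  unfold Cut yy
  split_ifs <;> rfl

lemma lc_succ (μ : ℝ) (k : ℕ) : lc μ (k+1) = if Cut μ (k+1) then (k+1) else lc μ k := by
  rw [lc]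

end Everything
section Everything2
attribute [local instance 10] Classical.propDecidable
open Set

variable {μ : ℝ}

lemma tent_half : tentMap μ (1/2) = μ/2 := by
  rw [tent_le le_rfl]; ring

lemma tent_one : tentMap μ (1 : ℝ) = 0 := by
  rw [tent_ge (by norm_num)]; ring

lemma iter_succ' (k : ℕ) (x : ℝ) :
    (tentMap μ)^[k+1] x = tentMap μ ((tentMap μ)^[k] x) :=
  Function.iterate_succ_apply' _ _ _

structure Geo (μ : ℝ) (k : ℕ) : Prop where
  h1 : 1/2 < rr μ k
  h2 : rr μ k ≤ 1
  slope : ∃ a : ℝ, (a = μ^k ∨ a = -μ^k) ∧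
    ∀ x ∈ Set.Icc (1/2:ℝ) (rr μ k),
      (tentMap μ)^[k] x = (tentMap μ)^[k] (1/2) + a * (x - 1/2)

structure Pin (μ : ℝ) (k : ℕ) : Prop where
  cutS : Cut μ (lc μ (k-1))
  Spos : 1 ≤ lc μ (k-1)
  Slt  : lc μ (k-1) < k
  nocut : ∀ j, lc μ (k-1) < j → j < k → ¬ Cut μ j
  rpre : (tentMap μ)^[lc μ (k-1)] (rr μ k) = 1/2
  rval : (tentMap μ)^[k] (rr μ k) = (tentMap μ)^[k - lc μ (k-1)] (1/2)
  req  : rr μ k = rr μ (lc μ (k-1) + 1)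
  hlt1 : rr μ k < 1

lemma cut_one (hμ1 : 1 < μ) : Cut μ 1 := by
  unfold Cut
  simp only [Function.iterate_one, rr]
  rw [tent_half, tent_one]
  nlinarith

lemma geo_one (hμ1 : 1 < μ) : Geo μ 1 := by
  refine ⟨by norm_num [rr], by norm_num [rr], -μ, Or.inr (by ring), ?_⟩
  intro x hx
  simp only [Function.iterate_one, tent_half]
  rw [tent_ge hx.1]
  ring

lemma cut_ne {k : ℕ} (hc : Cut μ k) :
    (tentMap μ)^[k] (1/2) ≠ 1/2 ∧ (tentMap μ)^[k] (rr μ k) ≠ 1/2 ∧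
      (tentMap μ)^[k] (rr μ k) ≠ (tentMap μ)^[k] (1/2) := by
  have hc' : ((tentMap μ)^[k] (1/2) - 1/2) * ((tentMap μ)^[k] (rr μ k) - 1/2) < 0 := hc
  refine ⟨?_, ?_, ?_⟩ <;> intro h <;> rw [h] at hc'
  · nlinarith
  · nlinarith
  · nlinarith [sq_nonneg ((tentMap μ)^[k] (1/2) - 1/2)]

lemma apos {k : ℕ} (hμ1 : 1 < μ) {a : ℝ} (ha : a = μ^k ∨ a = -μ^k) : a ≠ 0 := by
  have : (0:ℝ) < μ^k := pow_pos (by linarith) k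
  rcases ha with h | h <;> rw [h] <;> intro hh <;> nlinarith

private lemma ucut {a v w R u : ℝ} (hR : 1/2 < R) (hw : w = v + a*(R - 1/2))
    (hprod : (v - 1/2)*(w - 1/2) < 0) (hau : a * u = 1/2 - v)
    (hsign : a < 0 ∨ 0 < a) : 0 < u ∧ u < R - 1/2 := by
  have hu0 : 0 < u := by
    rcases hsign with hap | hap
    · by_contra h2
      push_neg at h2
      have h3 : 0 ≤ a * u := by nlinarith
      have h4 : v ≤ 1/2 := by linarith
      have h5 : a * (R - 1/2) < 0 := mul_neg_of_neg_of_pos hap (by linarith)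
      nlinarith
    · by_contra h2
      push_neg at h2
      have h3 : a * u ≤ 0 := mul_nonpos_iff.mpr (Or.inl ⟨hap.le, h2⟩)
      have h4 : 1/2 ≤ v := by linarith
      have h5 : (0:ℝ) < a * (R - 1/2) := mul_pos hap (by linarith)
      nlinarith
  refine ⟨hu0, ?_⟩
  rcases hsign with hap | hap
  · by_contra h2
    push_neg at h2
    have h3 : a * u ≤ a * (R - 1/2) := mul_le_mul_of_nonpos_left h2 hap.le
    have h4 : 1/2 < v := by nlinarith
    nlinarith
  · by_contra h2
    push_neg at h2
    have h3 : a * (R - 1/2) ≤ a * u := mul_le_mul_of_nonneg_left h2 hap.le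
    have h4 : v < 1/2 := by nlinarith
    nlinarith

lemma cut_data (hμ1 : 1 < μ) {k : ℕ} (g : Geo μ k) (hc : Cut μ k) :
    1/2 < yy μ k ∧ yy μ k < rr μ k ∧ (tentMap μ)^[k] (yy μ k) = 1/2 := by
  obtain ⟨a, ha, hsl⟩ := g.slope
  have ha0 : a ≠ 0 := apos hμ1 ha
  have hR2 : 1/2 < rr μ k := g.h1
  have hw : (tentMap μ)^[k] (rr μ k) = (tentMap μ)^[k] (1/2) + a * (rr μ k - 1/2) :=
    hsl _ ⟨g.h1.le, le_rfl⟩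
  have hprod : ((tentMap μ)^[k] (1/2) - 1/2) * ((tentMap μ)^[k] (rr μ k) - 1/2) < 0 := hc
  have hau : a * ((1/2 - (tentMap μ)^[k] (1/2)) / a) = 1/2 - (tentMap μ)^[k] (1/2) := by
    field_simp
  have hyy : yy μ k = 1/2 + (1/2 - (tentMap μ)^[k] (1/2)) / a := by
    unfold yy
    rw [hw, show (tentMap μ)^[k] (1/2) + a * (rr μ k - 1/2) - (tentMap μ)^[k] (1/2)
        = a * (rr μ k - 1/2) from by ring,
      mul_comm a (rr μ k - 1/2), mul_div_mul_left _ _ (sub_ne_zero_of_ne (ne_of_gt hR2))]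
  obtain ⟨hu0, hu2⟩ := ucut hR2 hw hprod hau ha0.lt_or_gt
  refine ⟨by rw [hyy]; linarith, by rw [hyy]; linarith, ?_⟩
  have hyIcc : yy μ k ∈ Set.Icc (1/2:ℝ) (rr μ k) := by
    rw [hyy]; constructor <;> linarith
  rw [hsl _ hyIcc, hyy,
    show (1/2 + (1/2 - (tentMap μ)^[k] (1/2)) / a - 1/2 : ℝ)
      = (1/2 - (tentMap μ)^[k] (1/2)) / a from by ring, hau]
  ring

end Everything2
section Everything3
attribute [local instance 10] Classical.propDecidable
open Set

variable {μ : ℝ}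

lemma iter_two (x : ℝ) : (tentMap μ)^[2] x = tentMap μ (tentMap μ x) := by
  rw [iter_succ', Function.iterate_one]

lemma lc_eq_of_cut {k : ℕ} (hk : 1 ≤ k) (h : Cut μ k) : lc μ k = k := by
  cases k with
  | zero => omega
  | succ m => rw [lc_succ, if_pos h]

lemma lc_eq_of_not {k : ℕ} (hk : 1 ≤ k) (h : ¬ Cut μ k) : lc μ k = lc μ (k-1) := by
  cases k with
  | zero => omega
  | succ m => rw [lc_succ, if_neg h]; simp

lemma slope_step (hμ1 : 1 < μ) {k : ℕ} {a R r' : ℝ}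
    (ha : a = μ^k ∨ a = -μ^k)
    (hsl : ∀ x ∈ Icc (1/2:ℝ) R, (tentMap μ)^[k] x = (tentMap μ)^[k] (1/2) + a*(x - 1/2))
    (hr1 : 1/2 < r') (hrR : r' ≤ R)
    (hside : ((tentMap μ)^[k] (1/2) ≤ 1/2 ∧ (tentMap μ)^[k] r' ≤ 1/2) ∨
      (1/2 ≤ (tentMap μ)^[k] (1/2) ∧ 1/2 ≤ (tentMap μ)^[k] r')) :
    ∃ a' : ℝ, (a' = μ^(k+1) ∨ a' = -μ^(k+1)) ∧
      ∀ x ∈ Icc (1/2:ℝ) r', (tentMap μ)^[k+1] x = (tentMap μ)^[k+1] (1/2) + a'*(x - 1/2) := by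
  have ha0 : a ≠ 0 := apos hμ1 ha
  have hw' : (tentMap μ)^[k] r' = (tentMap μ)^[k] (1/2) + a * (r' - 1/2) :=
    hsl r' ⟨by linarith, hrR⟩
  rcases hside with ⟨hv, hw⟩ | ⟨hv, hw⟩
  · refine ⟨μ * a, ?_, ?_⟩
    · rcases ha with h | h
      · left; rw [h, pow_succ]; ring
      · right; rw [h, pow_succ]; ring
    · intro x hx
      have ht : (tentMap μ)^[k] x = (tentMap μ)^[k] (1/2) + a * (x - 1/2) :=
        hsl x ⟨hx.1, le_trans hx.2 hrR⟩
      have htle : (tentMap μ)^[k] x ≤ 1/2 := by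
        rcases ha0.lt_or_gt with hneg | hpos
        · have : a * (x - 1/2) ≤ 0 :=
            mul_nonpos_iff.mpr (Or.inr ⟨hneg.le, by linarith [hx.1]⟩)
          linarith
        · have : a * (x - 1/2) ≤ a * (r' - 1/2) :=
            mul_le_mul_of_nonneg_left (by linarith [hx.2]) hpos.le
          linarith
      rw [iter_succ', tent_le htle, ht, iter_succ', tent_le hv]
      ring
  · refine ⟨-(μ * a), ?_, ?_⟩
    · rcases ha with h | h
      · right; rw [h, pow_succ]; ring
      · left; rw [h, pow_succ]; ring
    · intro x hx
      have ht : (tentMap μ)^[k] x = (tentMap μ)^[k] (1/2) + a * (x - 1/2) :=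
        hsl x ⟨hx.1, le_trans hx.2 hrR⟩
      have htge : 1/2 ≤ (tentMap μ)^[k] x := by
        rcases ha0.lt_or_gt with hneg | hpos
        · have : a * (r' - 1/2) ≤ a * (x - 1/2) :=
            mul_le_mul_of_nonpos_left (by linarith [hx.2]) hneg.le
          linarith
        · have : 0 ≤ a * (x - 1/2) := mul_nonneg hpos.le (by linarith [hx.1])
          linarith
      rw [iter_succ', tent_ge htge, ht, iter_succ', tent_ge hv]
      ring

lemma rr_two (hμ1 : 1 < μ) : rr μ 2 = 1 - 1/(2*μ) := by
  have hμ0 : μ ≠ 0 := by linarith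
  rw [rr_succ μ le_rfl, if_pos (cut_one hμ1)]
  unfold yy
  rw [show rr μ 1 = 1 from rfl]
  simp only [Function.iterate_one, tent_half, tent_one]
  field_simp
  ring_nf
  rw [mul_inv_cancel₀ hμ0, pow_two, mul_assoc, mul_inv_cancel₀ hμ0]
  ring

lemma geo_two (hμ1 : 1 < μ) : Geo μ 2 := by
  have hμ0 : (0:ℝ) < μ := by linarith
  have hr : rr μ 2 = 1 - 1/(2*μ) := rr_two hμ1
  have hinv : 1/(2*μ) < 1/2 := by
    rw [div_lt_div_iff₀ (by linarith) (by norm_num)]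
    nlinarith
  have hinv0 : 0 < 1/(2*μ) := by positivity
  refine ⟨by rw [hr]; linarith, by rw [hr]; linarith, μ^2, Or.inl rfl, ?_⟩
  intro x hx
  rw [hr] at hx
  have hx1 : 1/2 ≤ x := hx.1
  have hx2 : x ≤ 1 - 1/(2*μ) := hx.2
  have hfx : tentMap μ x = μ * (1 - x) := tent_ge hx1
  have hfxge : 1/2 ≤ tentMap μ x := by
    rw [hfx]
    have : 1/(2*μ) ≤ 1 - x := by linarith
    have h2 : μ * (1/(2*μ)) ≤ μ * (1 - x) := by
      apply mul_le_mul_of_nonneg_left this (by linarith)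
    have h3 : μ * (1/(2*μ)) = 1/2 := by field_simp
    linarith
  rw [iter_two, iter_two, tent_half, tent_ge (by linarith : (1:ℝ)/2 ≤ μ/2),
    tent_ge hfxge, hfx]
  ring

lemma lc_one (hμ1 : 1 < μ) : lc μ 1 = 1 := lc_eq_of_cut le_rfl (cut_one hμ1)

lemma pin_two (hμ1 : 1 < μ) : Pin μ 2 := by
  have hμ0 : (0:ℝ) < μ := by linarith
  have hr : rr μ 2 = 1 - 1/(2*μ) := rr_two hμ1
  have hinv0 : 0 < 1/(2*μ) := by positivity
  have hinv : 1/(2*μ) < 1/2 := by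
    rw [div_lt_div_iff₀ (by linarith) (by norm_num)]
    nlinarith
  have hl : lc μ (2-1) = 1 := lc_one hμ1
  have hrpre : tentMap μ (rr μ 2) = 1/2 := by
    rw [hr, tent_ge (by linarith)]
    field_simp
    ring
  refine ⟨?_, ?_, ?_, ?_, ?_, ?_, ?_, ?_⟩
  · rw [hl]; exact cut_one hμ1
  · rw [hl]
  · rw [hl]; norm_num
  · intro j h1 h2; rw [hl] at h1; omega
  · rw [hl, Function.iterate_one]; exact hrpre
  · rw [hl, iter_two, hrpre]
    norm_num
  · rw [hl]
  · rw [hr]; linarith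

lemma step_all (hμ1 : 1 < μ) {k : ℕ} (hk : 2 ≤ k) (g : Geo μ k) (p : Pin μ k) :
    Geo μ (k+1) ∧ Pin μ (k+1) := by
  obtain ⟨a, ha, hsl⟩ := g.slope
  have hk1 : 1 ≤ k := by omega
  by_cases hc : Cut μ k
  · obtain ⟨hy1, hy2, hy3⟩ := cut_data hμ1 g hc
    have hrs : rr μ (k+1) = yy μ k := by rw [rr_succ μ hk1, if_pos hc]
    have lck : lc μ ((k+1)-1) = k := by simpa using lc_eq_of_cut hk1 hc
    have hside : ((tentMap μ)^[k] (1/2) ≤ 1/2 ∧ (tentMap μ)^[k] (yy μ k) ≤ 1/2) ∨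
        (1/2 ≤ (tentMap μ)^[k] (1/2) ∧ 1/2 ≤ (tentMap μ)^[k] (yy μ k)) := by
      rcases le_total ((tentMap μ)^[k] (1/2)) (1/2) with h | h
      · exact Or.inl ⟨h, by rw [hy3]⟩
      · exact Or.inr ⟨h, by rw [hy3]⟩
    obtain ⟨a', ha', hsl'⟩ := slope_step hμ1 ha hsl hy1 hy2.le hside
    constructor
    · exact ⟨by rw [hrs]; exact hy1, by rw [hrs]; linarith [g.h2], a', ha',
        by rw [hrs]; exact hsl'⟩
    · refine ⟨?_, ?_, ?_, ?_, ?_, ?_, ?_, ?_⟩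
      · rw [lck]; exact hc
      · rw [lck]; omega
      · rw [lck]; omega
      · intro j h1 h2; rw [lck] at h1; omega
      · rw [lck, hrs]; exact hy3
      · rw [lck, hrs, show k+1-k = 1 from by omega, iter_succ', hy3, Function.iterate_one]
      · rw [lck]
      · rw [hrs]; linarith [p.hlt1, hy2]
  · have hrs : rr μ (k+1) = rr μ k := by rw [rr_succ μ hk1, if_neg hc]
    have lck : lc μ ((k+1)-1) = lc μ (k-1) := by simpa using lc_eq_of_not hk1 hc
    have hw : (tentMap μ)^[k] (rr μ k) = (tentMap μ)^[k] (1/2) + a * (rr μ k - 1/2) :=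
      hsl _ ⟨g.h1.le, le_rfl⟩
    have hnprod : 0 ≤ ((tentMap μ)^[k] (1/2) - 1/2) * ((tentMap μ)^[k] (rr μ k) - 1/2) :=
      not_lt.mp hc
    have hside : ((tentMap μ)^[k] (1/2) ≤ 1/2 ∧ (tentMap μ)^[k] (rr μ k) ≤ 1/2) ∨
        (1/2 ≤ (tentMap μ)^[k] (1/2) ∧ 1/2 ≤ (tentMap μ)^[k] (rr μ k)) := by
      rcases lt_trichotomy ((tentMap μ)^[k] (1/2)) (1/2) with h | h | h
      · left
        refine ⟨h.le, ?_⟩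
        by_contra h2
        push_neg at h2
        nlinarith
      · rcases le_total ((tentMap μ)^[k] (rr μ k)) (1/2) with h2 | h2
        · exact Or.inl ⟨h.le, h2⟩
        · exact Or.inr ⟨h.ge, h2⟩
      · right
        refine ⟨h.le, ?_⟩
        by_contra h2
        push_neg at h2
        nlinarith
    obtain ⟨a', ha', hsl'⟩ := slope_step hμ1 ha hsl g.h1 le_rfl hside
    have hSlek : lc μ (k-1) ≤ k := le_of_lt p.Slt
    constructor
    · exact ⟨by rw [hrs]; exact g.h1, by rw [hrs]; exact g.h2, a', ha',
        by rw [hrs]; exact hsl'⟩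
    · refine ⟨?_, ?_, ?_, ?_, ?_, ?_, ?_, ?_⟩
      · rw [lck]; exact p.cutS
      · rw [lck]; exact p.Spos
      · rw [lck]; omega
      · intro j h1 h2
        rw [lck] at h1
        rcases Nat.lt_or_ge j k with hj | hj
        · exact p.nocut j h1 hj
        · have : j = k := by omega
          rw [this]; exact hc
      · rw [lck, hrs]; exact p.rpre
      · rw [lck, hrs, iter_succ', p.rval, ← iter_succ']
        congr 1
        omega
      · rw [lck, hrs]; exact p.req
      · rw [hrs]; exact p.hlt1

lemma geo_pin_all (hμ1 : 1 < μ) : ∀ k, 2 ≤ k → Geo μ k ∧ Pin μ k := by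
  intro k hk
  induction k, hk using Nat.le_induction with
  | base => exact ⟨geo_two hμ1, pin_two hμ1⟩
  | succ k hk ih => exact step_all hμ1 hk ih.1 ih.2

end Everything3
section Everything4
attribute [local instance 10] Classical.propDecidable
open Set

variable {μ : ℝ}

lemma geo_any (hμ1 : 1 < μ) {k : ℕ} (hk : 1 ≤ k) : Geo μ k := by
  rcases Nat.lt_or_ge k 2 with h | h
  · have : k = 1 := by omega
    rw [this]; exact geo_one hμ1
  · exact (geo_pin_all hμ1 k h).1

lemma pin_any (hμ1 : 1 < μ) {k : ℕ} (hk : 2 ≤ k) : Pin μ k := (geo_pin_all hμ1 k hk).2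

lemma cut_of_inner (hμ1 : 1 < μ) {j : ℕ} (hj : 1 ≤ j) {u : ℝ}
    (h1 : 1/2 < u) (h2 : u < rr μ j) (h3 : (tentMap μ)^[j] u = 1/2) : Cut μ j := by
  obtain ⟨a, ha, hsl⟩ := (geo_any hμ1 hj).slope
  have ha0 : a ≠ 0 := apos hμ1 ha
  have hu : (tentMap μ)^[j] u = (tentMap μ)^[j] (1/2) + a * (u - 1/2) :=
    hsl u ⟨h1.le, h2.le⟩
  have hw : (tentMap μ)^[j] (rr μ j) = (tentMap μ)^[j] (1/2) + a * (rr μ j - 1/2) :=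
    hsl _ ⟨(geo_any hμ1 hj).h1.le, le_rfl⟩
  have e1 : (tentMap μ)^[j] (1/2) - 1/2 = -(a * (u - 1/2)) := by
    rw [h3] at hu; linarith
  show ((tentMap μ)^[j] (1/2) - 1/2) * ((tentMap μ)^[j] (rr μ j) - 1/2) < 0
  have e2 : (tentMap μ)^[j] (rr μ j) - 1/2 = a * (rr μ j - u) := by
    rw [hw]
    have : a * (rr μ j - 1/2) - a * (u - 1/2) = a * (rr μ j - u) := by ring
    linarith [e1]
  rw [e1, e2]
  have hpos : 0 < (a * a) * ((u - 1/2) * (rr μ j - u)) :=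
    mul_pos (mul_self_pos.mpr ha0) (mul_pos (by linarith) (by linarith))
  nlinarith [hpos]

lemma rr_of_nocut_range {S j : ℕ} (hS : 1 ≤ S)
    (h : ∀ i, S < i → i < j → ¬ Cut μ i) (hj : S < j) : rr μ j = rr μ (S+1) := by
  induction j with
  | zero => omega
  | succ m ih =>
    rcases Nat.lt_or_ge S m with hm | hm
    · have hmS : rr μ m = rr μ (S+1) := ih (fun i h1 h2 => h i h1 (by omega)) hm
      rw [rr_succ μ (by omega), if_neg (h m hm (by omega)), hmS]
    · have : m = S := by omega
      rw [this]

lemma iterate_split (m n : ℕ) (x : ℝ) :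
    (tentMap μ)^[m + n] x = (tentMap μ)^[m] ((tentMap μ)^[n] x) :=
  Function.iterate_add_apply _ m n x

lemma gap_lemma (hμ1 : 1 < μ) {S : ℕ} (hS : 1 ≤ S) (hc : Cut μ S)
    (hno : ∀ i, S < i → i < 2*S → ¬ Cut μ i) : Cut μ (2*S) := by
  have geoS : Geo μ S := geo_any hμ1 hS
  obtain ⟨hy1, hy2, hy3⟩ := cut_data hμ1 geoS hc
  have hrS1 : rr μ (S+1) = yy μ S := by rw [rr_succ μ hS, if_pos hc]
  have hx1 : 1/2 < rr μ (S+1) := by rw [hrS1]; exact hy1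
  have hx2 : rr μ (S+1) ≤ rr μ S := by rw [hrS1]; exact hy2.le
  have hx3 : (tentMap μ)^[S] (rr μ (S+1)) = 1/2 := by rw [hrS1]; exact hy3
  obtain ⟨a, ha, hsl⟩ := geoS.slope
  have ha0 : a ≠ 0 := apos hμ1 ha
  have hxv : (tentMap μ)^[S] (rr μ (S+1))
      = (tentMap μ)^[S] (1/2) + a * (rr μ (S+1) - 1/2) := hsl _ ⟨hx1.le, hx2⟩
  have hav : a * (rr μ (S+1) - 1/2) = 1/2 - (tentMap μ)^[S] (1/2) := by
    rw [hx3] at hxv; linarith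
  have hvne : (tentMap μ)^[S] (1/2) ≠ 1/2 := (cut_ne hc).1
  have hpow : 1 < μ^S := one_lt_pow₀ hμ1 (by omega)
  obtain ⟨t, htS, htb⟩ : ∃ t, (tentMap μ)^[S] t = 1/2 ∧
      ((1/2 < (tentMap μ)^[S] (1/2) ∧ 1/2 < t ∧ t < (tentMap μ)^[S] (1/2)) ∨
       ((tentMap μ)^[S] (1/2) < 1/2 ∧ (tentMap μ)^[S] (1/2) < t ∧ t < 1/2)) := by
    rcases lt_or_gt_of_ne hvne with h | h
    · refine ⟨1 - rr μ (S+1), by rw [iter_mirror hS]; exact hx3, Or.inr ⟨h, ?_, by linarith⟩⟩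
      rcases ha with h2 | h2
      · rw [h2] at hav; nlinarith
      · exfalso; rw [h2] at hav; nlinarith
    · refine ⟨rr μ (S+1), hx3, Or.inl ⟨h, hx1, ?_⟩⟩
      rcases ha with h2 | h2
      · exfalso; rw [h2] at hav; nlinarith
      · rw [h2] at hav; nlinarith
  obtain ⟨u, hu1, hux, huS⟩ : ∃ u, 1/2 < u ∧ u < rr μ (S+1) ∧ (tentMap μ)^[S] u = t := by
    have hau : a * ((t - (tentMap μ)^[S] (1/2))/a) = t - (tentMap μ)^[S] (1/2) := by
      field_simp
    have hq : 0 < (t - (tentMap μ)^[S] (1/2))/a ∧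
        (t - (tentMap μ)^[S] (1/2))/a < rr μ (S+1) - 1/2 := by
      rcases ha0.lt_or_gt with hn | hp
      · have hv2 : 1/2 < (tentMap μ)^[S] (1/2) := by nlinarith
        obtain ⟨-, h2, h3⟩ := htb.resolve_right (fun h => absurd h.1 (by linarith))
        refine ⟨div_pos_iff.mpr (Or.inr ⟨by linarith, hn⟩), ?_⟩
        rw [div_lt_iff_of_neg hn]
        nlinarith
      · have hv2 : (tentMap μ)^[S] (1/2) < 1/2 := by nlinarith
        obtain ⟨-, h2, h3⟩ := htb.resolve_left (fun h => absurd h.1 (by linarith))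
        refine ⟨div_pos (by linarith) hp, ?_⟩
        rw [div_lt_iff₀ hp]
        nlinarith
    refine ⟨1/2 + (t - (tentMap μ)^[S] (1/2))/a, by linarith [hq.1], by linarith [hq.2], ?_⟩
    rw [hsl _ ⟨by linarith [hq.1], by linarith [hq.2]⟩,
      show (1/2 + (t - (tentMap μ)^[S] (1/2))/a - 1/2 : ℝ)
        = (t - (tentMap μ)^[S] (1/2))/a from by ring, hau]
    ring
  have hr2S : rr μ (2*S) = rr μ (S+1) := rr_of_nocut_range hS hno (by omega)
  have h2S : (tentMap μ)^[2*S] u = 1/2 := by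
    rw [two_mul, iterate_split, huS, htS]
  exact cut_of_inner hμ1 (by omega) hu1 (by rw [hr2S]; exact hux) h2S

end Everything4
section Everything5
attribute [local instance 10] Classical.propDecidable
open Set

variable {μ : ℝ}

set_option maxHeartbeats 2000000 in
lemma diff_cut (hμ1 : 1 < μ) {k : ℕ} (hk : 2 ≤ k) (hc : Cut μ k)
    (hcrit' : ∀ i, 1 ≤ i → i < k → (tentMap μ)^[i] (1/2 : ℝ) ≠ 1/2) :
    Cut μ (k - lc μ (k-1)) := by
  have pin : Pin μ k := pin_any hμ1 hk
  have geoK : Geo μ k := geo_any hμ1 (by omega)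
  have hS1 : 1 ≤ lc μ (k-1) := pin.Spos
  have hSk : lc μ (k-1) < k := pin.Slt
  set S := lc μ (k-1) with hSdef
  rcases Nat.lt_or_ge (k - S) 2 with hk'1 | hk'2
  · have : k - S = 1 := by omega
    rw [this]; exact cut_one hμ1
  -- k' := k - S ≥ 2
  obtain ⟨hy1, hy2, hy3⟩ := cut_data hμ1 geoK hc
  have geoS : Geo μ S := geo_any hμ1 hS1
  have hrkS : rr μ k ≤ rr μ S := by
    have h1 : rr μ (S+1) = yy μ S := by rw [rr_succ μ hS1, if_pos pin.cutS]
    have h2 : yy μ S < rr μ S := (cut_data hμ1 geoS pin.cutS).2.1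
    rw [pin.req, ← hSdef, h1]
    exact h2.le
  obtain ⟨a, ha, hsl⟩ := geoS.slope
  have ha0 : a ≠ 0 := apos hμ1 ha
  have hzdef : (tentMap μ)^[S] (yy μ k)
      = (tentMap μ)^[S] (1/2) + a * (yy μ k - 1/2) :=
    hsl _ ⟨hy1.le, by linarith⟩
  have he1 : a * (rr μ k - 1/2) = 1/2 - (tentMap μ)^[S] (1/2) := by
    have := hsl (rr μ k) ⟨by linarith [geoK.h1], hrkS⟩
    rw [pin.rpre] at this
    linarith
  have hvne : (tentMap μ)^[S] (1/2) ≠ 1/2 := (cut_ne pin.cutS).1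
  have hRk : 1/2 < rr μ k := geoK.h1
  -- z := f^[S] y is strictly between vS and 1/2
  have hzb : ((tentMap μ)^[S] (1/2) < 1/2 ∧ (tentMap μ)^[S] (1/2) < (tentMap μ)^[S] (yy μ k)
        ∧ (tentMap μ)^[S] (yy μ k) < 1/2) ∨
      (1/2 < (tentMap μ)^[S] (1/2) ∧ 1/2 < (tentMap μ)^[S] (yy μ k)
        ∧ (tentMap μ)^[S] (yy μ k) < (tentMap μ)^[S] (1/2)) := by
    rcases ha0.lt_or_gt with hn | hp
    · right
      have hv : 1/2 < (tentMap μ)^[S] (1/2) := by nlinarith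
      refine ⟨hv, ?_, ?_⟩
      · rw [hzdef]
        nlinarith [mul_lt_mul_of_neg_left (show yy μ k - 1/2 < rr μ k - 1/2 by linarith) hn]
      · rw [hzdef]
        nlinarith [mul_neg_of_neg_of_pos hn (show (0:ℝ) < yy μ k - 1/2 by linarith)]
    · left
      have hv : (tentMap μ)^[S] (1/2) < 1/2 := by nlinarith
      refine ⟨hv, ?_, ?_⟩
      · rw [hzdef]
        nlinarith [mul_pos hp (show (0:ℝ) < yy μ k - 1/2 by linarith)]
      · rw [hzdef]
        nlinarith [mul_lt_mul_of_pos_left (show yy μ k - 1/2 < rr μ k - 1/2 by linarith) hp]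
  have hzk' : (tentMap μ)^[k - S] ((tentMap μ)^[S] (yy μ k)) = 1/2 := by
    rw [← iterate_split, show k - S + S = k by omega, hy3]
  -- the point u on the right of 1/2
  obtain ⟨u, hu1, huk', hud⟩ : ∃ u, 1/2 < u ∧ (tentMap μ)^[k - S] u = 1/2 ∧
      (u = (tentMap μ)^[S] (yy μ k) ∨ u = 1 - (tentMap μ)^[S] (yy μ k)) := by
    rcases hzb with ⟨h1, h2, h3⟩ | ⟨h1, h2, h3⟩
    · exact ⟨1 - (tentMap μ)^[S] (yy μ k), by linarith,
        by rw [iter_mirror (by omega : 1 ≤ k - S)]; exact hzk', Or.inr rfl⟩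
    · exact ⟨(tentMap μ)^[S] (yy μ k), h2, hzk', Or.inl rfl⟩
  have hult : u < rr μ (k - S) := by
    by_contra hge
    push_neg at hge
    have pin' : Pin μ (k - S) := pin_any hμ1 hk'2
    have geo' : Geo μ (k - S) := geo_any hμ1 (by omega)
    have hp1 : 1 ≤ lc μ (k - S - 1) := pin'.Spos
    have hpk : lc μ (k - S - 1) < k - S := pin'.Slt
    set p := lc μ (k - S - 1) with hpdef
    have hrp : (tentMap μ)^[p] (rr μ (k - S)) = 1/2 := pin'.rpre
    have hR' : 1/2 < rr μ (k - S) := geo'.h1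
    -- the representative q of rr (k-S) on the side of vS
    obtain ⟨qq, hqp, hqb⟩ : ∃ qq, (tentMap μ)^[p] qq = 1/2 ∧
        (((tentMap μ)^[S] (yy μ k) ≤ qq ∧ qq < 1/2) ∨
         (1/2 < qq ∧ qq ≤ (tentMap μ)^[S] (yy μ k))) := by
      rcases hzb with ⟨h1, h2, h3⟩ | ⟨h1, h2, h3⟩
      · -- z < 1/2, u = 1 - z
        have hu : u = 1 - (tentMap μ)^[S] (yy μ k) := by
          rcases hud with h | h
          · exfalso; rw [h] at hu1; linarith
          · exact h
        refine ⟨1 - rr μ (k - S), by rw [iter_mirror hp1]; exact hrp, Or.inl ⟨?_, by linarith⟩⟩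
        rw [hu] at hge
        linarith
      · -- z > 1/2, u = z
        have hu : u = (tentMap μ)^[S] (yy μ k) := by
          rcases hud with h | h
          · exact h
          · exfalso
            rw [h] at hu1
            linarith
        refine ⟨rr μ (k - S), hrp, Or.inr ⟨hR', by rw [← hu]; exact hge⟩⟩
    -- pull qq back through f^[S]
    obtain ⟨xq, hxy, hxR, hxq⟩ : ∃ xq, yy μ k ≤ xq ∧ xq < rr μ k ∧
        (tentMap μ)^[S] xq = qq := by
      obtain ⟨w, hw⟩ : ∃ w, a * w = qq - (tentMap μ)^[S] (1/2) :=
        ⟨(qq - (tentMap μ)^[S] (1/2))/a, by field_simp⟩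
      have hay : a * (yy μ k - 1/2) = (tentMap μ)^[S] (yy μ k) - (tentMap μ)^[S] (1/2) := by
        linarith [hzdef]
      have hbounds : yy μ k - 1/2 ≤ w ∧ w < rr μ k - 1/2 := by
        rcases ha0.lt_or_gt with hn | hp'
        · obtain ⟨h1, h2, h3⟩ := hzb.resolve_left (fun h => by nlinarith [h.1])
          obtain ⟨h4, h5⟩ := hqb.resolve_left (fun h => by linarith [h.2])
          constructor
          · exact le_of_mul_le_mul_left
              (by linarith : (-a) * (yy μ k - 1/2) ≤ (-a) * w) (by linarith)
          · exact lt_of_mul_lt_mul_left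
              (by linarith : (-a) * w < (-a) * (rr μ k - 1/2)) (by linarith)
        · obtain ⟨h1, h2, h3⟩ := hzb.resolve_right (fun h => by nlinarith [h.1])
          obtain ⟨h4, h5⟩ := hqb.resolve_right (fun h => by linarith [h.1])
          constructor
          · exact le_of_mul_le_mul_left
              (by linarith : a * (yy μ k - 1/2) ≤ a * w) hp'
          · exact lt_of_mul_lt_mul_left
              (by linarith : a * w < a * (rr μ k - 1/2)) hp'.le
      refine ⟨1/2 + w, by linarith [hbounds.1], by linarith [hbounds.2], ?_⟩
      rw [hsl _ ⟨by linarith [hbounds.1, hy1], by linarith [hbounds.2]⟩,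
        show (1/2 + w - 1/2 : ℝ) = w from by ring, hw]
      ring
    rcases eq_or_lt_of_le hxy with heq | hlt
    · -- xq = y forces v_{k'-p} = 1/2, contradicting hcrit'
      have hzq : (tentMap μ)^[S] (yy μ k) = qq := by rw [← heq] at hxq; rw [← hxq]
      have : (tentMap μ)^[k - S - p] (1/2 : ℝ) = 1/2 := by
        have e1 : (tentMap μ)^[k - S] ((tentMap μ)^[S] (yy μ k)) = 1/2 := hzk'
        rw [show k - S = (k - S - p) + p by omega, iterate_split] at e1
        rw [hzq, hqp] at e1
        exact e1
      exact hcrit' (k - S - p) (by omega) (by omega) this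
    · -- xq interior gives a cut strictly between S and k
      have hj : ¬ Cut μ (p + S) := pin.nocut (p + S) (by omega) (by omega)
      apply hj
      have hrj : rr μ (p + S) = rr μ k := by
        have e1 : rr μ (p + S) = rr μ (S + 1) :=
          rr_of_nocut_range hS1 (fun i hi1 hi2 => pin.nocut i hi1 (by omega)) (by omega)
        rw [pin.req, ← hSdef, e1]
      exact cut_of_inner hμ1 (by omega) (show (1:ℝ)/2 < xq by linarith)
        (by rw [hrj]; exact hxR) (by rw [iterate_split, hxq, hqp])
  exact cut_of_inner hμ1 (by omega) hu1 hult huk'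

end Everything5
section Everything6
attribute [local instance 10] Classical.propDecidable
open Set

variable {μ : ℝ}

lemma tentBit_succ (x : ℝ) (m : ℕ) : tentBit μ x (m+1) =
    if (tentMap μ)^[m+1] x < 1/2 then tentBit μ x m
    else if 1/2 < (tentMap μ)^[m+1] x then !(tentBit μ x m)
    else true := by
  rw [tentBit]

lemma tentBit_zero (x : ℝ) : tentBit μ x 0 = if 1/2 ≤ x then true else false := by
  rw [tentBit]

lemma bit0_half : tentBit μ (1/2) 0 = true := by
  rw [tentBit_zero, if_pos le_rfl]

lemma bit1_half (hμ1 : 1 < μ) : tentBit μ (1/2) 1 = false := by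
  rw [tentBit_succ]
  have h : (tentMap μ)^[0+1] (1/2 : ℝ) = μ/2 := by
    rw [Function.iterate_one, tent_half]
  rw [h, if_neg (by push_neg; linarith), if_pos (by linarith), bit0_half]
  rfl

lemma lc_stable {S j : ℕ} (hS : 1 ≤ S) (hcS : Cut μ S)
    (hno : ∀ i, S < i → i ≤ j → ¬ Cut μ i) (hSj : S ≤ j) : lc μ j = S := by
  induction j, hSj using Nat.le_induction with
  | base => exact lc_eq_of_cut hS hcS
  | succ j hj ih =>
    rw [lc_succ, if_neg (hno (j+1) (by omega) le_rfl)]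
    exact ih (fun i h1 h2 => hno i h1 (by omega))

lemma bit_false (hμ1 : 1 < μ) (N : ℕ)
    (hcrit' : ∀ i, 1 ≤ i → i < N → (tentMap μ)^[i] (1/2 : ℝ) ≠ 1/2) :
    ∀ k, 1 ≤ k → k ≤ N → Cut μ k → tentBit μ (1/2) k = false := by
  intro k
  induction k using Nat.strong_induction_on with
  | _ k IH =>
    intro hk1 hkN hc
    rcases Nat.lt_or_ge k 2 with hk2 | hk2
    · have : k = 1 := by omega
      rw [this]; exact bit1_half hμ1
    have pin : Pin μ k := pin_any hμ1 hk2
    have hS1 : 1 ≤ lc μ (k-1) := pin.Spos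
    have hSk : lc μ (k-1) < k := pin.Slt
    set S := lc μ (k-1) with hSdef
    have hck' : Cut μ (k - S) :=
      diff_cut hμ1 hk2 hc (fun i h1 h2 => hcrit' i h1 (by omega))
    have hBk' : tentBit μ (1/2) (k - S) = false :=
      IH (k - S) (by omega) (by omega) (by omega) hck'
    -- bit relation along the non-cut stretch
    have key : ∀ m, m + 1 ≤ k - S → tentBit μ (1/2) (S + m) = !(tentBit μ (1/2) m) := by
      intro m
      induction m with
      | zero =>
        intro _
        rw [Nat.add_zero, bit0_half]
        have : tentBit μ (1/2) S = false :=
          IH S (by omega) hS1 (by omega) pin.cutS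
        rw [this]; rfl
      | succ m ihm =>
        intro hm
        have ihm' := ihm (by omega)
        have hj2 : 2 ≤ S + m + 1 := by omega
        have pinj : Pin μ (S + m + 1) := pin_any hμ1 hj2
        have hlcj : lc μ (S + m + 1 - 1) = S := by
          rw [show S + m + 1 - 1 = S + m by omega]
          exact lc_stable hS1 pin.cutS
            (fun i h1 h2 => pin.nocut i (by omega) (by omega)) (by omega)
        have hnc : ¬ Cut μ (S + m + 1) := pin.nocut _ (by omega) (by omega)
        have hrval : (tentMap μ)^[S + m + 1] (rr μ (S + m + 1))
            = (tentMap μ)^[m + 1] (1/2) := by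
          have := pinj.rval
          rw [hlcj] at this
          rw [this, show S + m + 1 - S = m + 1 by omega]
        have hprod : 0 ≤ ((tentMap μ)^[S+m+1] (1/2) - 1/2) * ((tentMap μ)^[m+1] (1/2) - 1/2) := by
          have := not_lt.mp hnc
          rw [hrval] at this
          exact this
        have hne1 : (tentMap μ)^[S+m+1] (1/2 : ℝ) ≠ 1/2 :=
          hcrit' (S+m+1) (by omega) (by omega)
        have hne2 : (tentMap μ)^[m+1] (1/2 : ℝ) ≠ 1/2 :=
          hcrit' (m+1) (by omega) (by omega)
        have hside : ((tentMap μ)^[S+m+1] (1/2 : ℝ) < 1/2 ∧ (tentMap μ)^[m+1] (1/2 : ℝ) < 1/2)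
            ∨ (1/2 < (tentMap μ)^[S+m+1] (1/2 : ℝ) ∧ 1/2 < (tentMap μ)^[m+1] (1/2 : ℝ)) := by
          rcases lt_or_gt_of_ne hne1 with h | h
          · left
            refine ⟨h, ?_⟩
            rcases lt_or_gt_of_ne hne2 with h2 | h2
            · exact h2
            · exfalso; nlinarith
          · right
            refine ⟨h, ?_⟩
            rcases lt_or_gt_of_ne hne2 with h2 | h2
            · exfalso; nlinarith
            · exact h2
        rw [show S + (m+1) = (S + m) + 1 by omega, tentBit_succ, tentBit_succ, ihm']
        rcases hside with ⟨h1, h2⟩ | ⟨h1, h2⟩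
        · rw [if_pos h1, if_pos h2]
        · rw [if_neg (not_lt.mpr h1.le), if_pos h1, if_neg (not_lt.mpr h2.le), if_pos h2]
    -- final step at the cut k
    have hkey := key (k - S - 1) (by omega)
    have hprodk : ((tentMap μ)^[k] (1/2) - 1/2) * ((tentMap μ)^[k - S] (1/2) - 1/2) < 0 := by
      have := hc
      unfold Cut at this
      rw [pin.rval, ← hSdef] at this
      exact this
    have hvk : (tentMap μ)^[k] (1/2 : ℝ) ≠ 1/2 := (cut_ne hc).1
    have hvk' : (tentMap μ)^[k - S] (1/2 : ℝ) ≠ 1/2 := (cut_ne hck').1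
    have hBk'eq : tentBit μ (1/2) (k - S) =
        if (tentMap μ)^[k - S] (1/2 : ℝ) < 1/2 then tentBit μ (1/2) (k - S - 1)
        else if 1/2 < (tentMap μ)^[k - S] (1/2 : ℝ) then !(tentBit μ (1/2) (k - S - 1))
        else true := by
      rw [show k - S = (k - S - 1) + 1 by omega, tentBit_succ,
        show k - S - 1 + 1 = k - S by omega]
    have hBkeq : tentBit μ (1/2) k =
        if (tentMap μ)^[k] (1/2 : ℝ) < 1/2 then tentBit μ (1/2) (k - 1)
        else if 1/2 < (tentMap μ)^[k] (1/2 : ℝ) then !(tentBit μ (1/2) (k - 1))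
        else true := by
      rw [show k = (k - 1) + 1 by omega, tentBit_succ, show k - 1 + 1 = k by omega]
    have hBk1 : tentBit μ (1/2) (k - 1) = !(tentBit μ (1/2) (k - S - 1)) := by
      rw [show k - 1 = S + (k - S - 1) by omega]
      exact hkey
    rcases lt_or_gt_of_ne hvk with h | h
    · have h2 : 1/2 < (tentMap μ)^[k - S] (1/2 : ℝ) := by
        rcases lt_or_gt_of_ne hvk' with h2 | h2
        · exfalso; nlinarith
        · exact h2
      rw [hBkeq, if_pos h, hBk1]
      rw [hBk'eq, if_neg (by push_neg; exact h2.le), if_pos h2] at hBk'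
      simp only [Bool.not_eq_false'] at hBk'
      rw [hBk']
      rfl
    · have h2 : (tentMap μ)^[k - S] (1/2 : ℝ) < 1/2 := by
        rcases lt_or_gt_of_ne hvk' with h2 | h2
        · exact h2
        · exfalso; nlinarith
      rw [hBkeq, if_neg (by push_neg; exact h.le), if_pos h, hBk1]
      rw [hBk'eq, if_pos h2] at hBk'
      rw [hBk']
      rfl

end Everything6
section Everything7
attribute [local instance 10] Classical.propDecidable
open Set

variable {μ : ℝ}

lemma tentCode_succ (x : ℝ) (k : ℕ) :
    tentCode μ (k+1) x = tentCode μ k x ++ [tentBit μ x k] := by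
  unfold tentCode
  rw [List.range_succ, List.map_append, List.map_singleton]

lemma code_one (x : ℝ) : tentCode μ 1 x = [tentBit μ x 0] := by
  unfold tentCode
  simp [List.range_succ]

lemma snoc_inj {a b : List Bool} {x y : Bool} : a ++ [x] = b ++ [y] ↔ a = b ∧ x = y := by
  constructor
  · intro h
    obtain ⟨h1, h2⟩ := List.append_inj' h rfl
    exact ⟨h1, by simpa using h2⟩
  · rintro ⟨rfl, rfl⟩; rfl

lemma code_bar_succ (k : ℕ) :
    (tentCode μ (k+1) (1/2)).map (fun b => !b)
      = (tentCode μ k (1/2)).map (fun b => !b) ++ [!(tentBit μ (1/2) k)] := by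
  rw [tentCode_succ, List.map_append, List.map_singleton]

lemma prev_of_code {k : ℕ} (hk : 1 ≤ k) {x y : ℝ}
    (h : tentCode μ k x = tentCode μ k y) : tentBit μ x (k-1) = tentBit μ y (k-1) := by
  obtain ⟨m, rfl⟩ : ∃ m, k = m + 1 := ⟨k - 1, by omega⟩
  rw [tentCode_succ, tentCode_succ] at h
  simpa using (snoc_inj.mp h).2

lemma prevbar_of_code {k : ℕ} (hk : 1 ≤ k) {x : ℝ}
    (h : tentCode μ k x = (tentCode μ k (1/2)).map (fun b => !b)) :
    tentBit μ x (k-1) = !(tentBit μ (1/2) (k-1)) := by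
  obtain ⟨m, rfl⟩ : ∃ m, k = m + 1 := ⟨k - 1, by omega⟩
  rw [tentCode_succ, code_bar_succ] at h
  simpa using (snoc_inj.mp h).2

lemma bit_eval_lt {k : ℕ} (hk : 1 ≤ k) {x : ℝ} (h : (tentMap μ)^[k] x < 1/2) :
    tentBit μ x k = tentBit μ x (k-1) := by
  obtain ⟨m, rfl⟩ : ∃ m, k = m + 1 := ⟨k - 1, by omega⟩
  rw [tentBit_succ, if_pos h]
  simp

lemma bit_eval_gt {k : ℕ} (hk : 1 ≤ k) {x : ℝ} (h : 1/2 < (tentMap μ)^[k] x) :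
    tentBit μ x k = !(tentBit μ x (k-1)) := by
  obtain ⟨m, rfl⟩ : ∃ m, k = m + 1 := ⟨k - 1, by omega⟩
  rw [tentBit_succ, if_neg (not_lt.mpr h.le), if_pos h]
  simp

lemma bit_eval_mid {k : ℕ} (hk : 1 ≤ k) {x : ℝ} (h : (tentMap μ)^[k] x = 1/2) :
    tentBit μ x k = true := by
  obtain ⟨m, rfl⟩ : ∃ m, k = m + 1 := ⟨k - 1, by omega⟩
  rw [tentBit_succ, if_neg (by rw [h]; exact lt_irrefl _), if_neg (by rw [h]; exact lt_irrefl _)]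

set_option maxHeartbeats 4000000 in
lemma code_step (hμ1 : 1 < μ) {k : ℕ} (hk : 1 ≤ k)
    (hvk : (tentMap μ)^[k] (1/2 : ℝ) ≠ 1/2)
    (hwk : (tentMap μ)^[k] (rr μ k) ≠ 1/2)
    (hBk : Cut μ k → tentBit μ (1/2) k = false)
    (IH1 : ∀ x ∈ Ico (0:ℝ) 1, (tentCode μ k x = tentCode μ k (1/2) ↔ x ∈ Ico (1/2) (rr μ k)))
    (IH2 : ∀ x ∈ Ico (0:ℝ) 1, (tentCode μ k x = (tentCode μ k (1/2)).map (fun b => !b)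
      ↔ x ∈ Ico (1 - rr μ k) (1/2))) :
    (∀ x ∈ Ico (0:ℝ) 1, (tentCode μ (k+1) x = tentCode μ (k+1) (1/2)
        ↔ x ∈ Ico (1/2) (rr μ (k+1)))) ∧
    (∀ x ∈ Ico (0:ℝ) 1, (tentCode μ (k+1) x = (tentCode μ (k+1) (1/2)).map (fun b => !b)
        ↔ x ∈ Ico (1 - rr μ (k+1)) (1/2))) := by
  have geoK : Geo μ k := geo_any hμ1 hk
  obtain ⟨a, ha, hsl⟩ := geoK.slope
  have ha0 : a ≠ 0 := apos hμ1 ha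
  have hR1 : 1/2 < rr μ k := geoK.h1
  have hwaff : (tentMap μ)^[k] (rr μ k) = (tentMap μ)^[k] (1/2) + a * (rr μ k - 1/2) :=
    hsl _ ⟨hR1.le, le_rfl⟩
  by_cases hc : Cut μ k
  · -- CUT CASE
    obtain ⟨hy1, hy2, hy3⟩ := cut_data hμ1 geoK hc
    have hrr : rr μ (k+1) = yy μ k := by rw [rr_succ μ hk, if_pos hc]
    have hBf : tentBit μ (1/2) k = false := hBk hc
    have hay : a * (yy μ k - 1/2) = 1/2 - (tentMap μ)^[k] (1/2) := by
      have := hsl (yy μ k) ⟨hy1.le, hy2.le⟩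
      rw [hy3] at this
      linarith
    have hsgn : ((tentMap μ)^[k] (1/2 : ℝ) < 1/2 ∧ 0 < a) ∨
        (1/2 < (tentMap μ)^[k] (1/2 : ℝ) ∧ a < 0) := by
      rcases lt_or_gt_of_ne hvk with h | h
      · left
        refine ⟨h, ?_⟩
        rcases ha0.lt_or_gt with hn | hp
        · exfalso; nlinarith [mul_neg_of_neg_of_pos hn (show (0:ℝ) < yy μ k - 1/2 by linarith)]
        · exact hp
      · right
        refine ⟨h, ?_⟩
        rcases ha0.lt_or_gt with hn | hp
        · exact hn
        · exfalso; nlinarith [mul_pos hp (show (0:ℝ) < yy μ k - 1/2 by linarith)]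
    have claimA : ∀ t, 1/2 ≤ t → t < yy μ k →
        (((tentMap μ)^[k] (1/2 : ℝ) < 1/2 → (tentMap μ)^[k] t < 1/2) ∧
         (1/2 < (tentMap μ)^[k] (1/2 : ℝ) → 1/2 < (tentMap μ)^[k] t)) := by
      intro t ht1 ht2
      have haff := hsl t ⟨ht1, by linarith⟩
      rcases hsgn with ⟨hv, hp⟩ | ⟨hv, hn⟩
      · exact ⟨fun _ => by nlinarith [mul_lt_mul_of_pos_left (show t - 1/2 < yy μ k - 1/2 by linarith) hp],
          fun h => absurd h (by linarith)⟩
      · exact ⟨fun h => absurd h (by linarith),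
          fun _ => by nlinarith [mul_lt_mul_of_neg_left (show t - 1/2 < yy μ k - 1/2 by linarith) hn]⟩
    have claimB : ∀ t, yy μ k < t → t ≤ rr μ k →
        (((tentMap μ)^[k] (1/2 : ℝ) < 1/2 → 1/2 < (tentMap μ)^[k] t) ∧
         (1/2 < (tentMap μ)^[k] (1/2 : ℝ) → (tentMap μ)^[k] t < 1/2)) := by
      intro t ht1 ht2
      have haff := hsl t ⟨by linarith, ht2⟩
      rcases hsgn with ⟨hv, hp⟩ | ⟨hv, hn⟩
      · exact ⟨fun _ => by nlinarith [mul_lt_mul_of_pos_left (show yy μ k - 1/2 < t - 1/2 by linarith) hp],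
          fun h => absurd h (by linarith)⟩
      · exact ⟨fun h => absurd h (by linarith),
          fun _ => by nlinarith [mul_lt_mul_of_neg_left (show yy μ k - 1/2 < t - 1/2 by linarith) hn]⟩
    constructor
    · -- c-part
      intro x hx01
      rw [tentCode_succ, tentCode_succ, snoc_inj, IH1 x hx01, hrr]
      constructor
      · rintro ⟨hxI, hbit⟩
        refine ⟨hxI.1, ?_⟩
        rcases lt_trichotomy x (yy μ k) with h | h | h
        · exact h
        · exfalso
          rw [bit_eval_mid hk (by rw [h]; exact hy3), hBf] at hbit
          simp at hbit
        · exfalso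
          have hprev : tentBit μ x (k-1) = tentBit μ (1/2) (k-1) :=
            prev_of_code hk ((IH1 x hx01).mpr hxI)
          rcases hsgn with ⟨hv, -⟩ | ⟨hv, -⟩
          · rw [bit_eval_gt hk ((claimB x h hxI.2.le).1 hv), hprev,
              bit_eval_lt hk hv] at hbit
            simp at hbit
          · rw [bit_eval_lt hk ((claimB x h hxI.2.le).2 hv), hprev,
              bit_eval_gt hk hv] at hbit
            simp at hbit
      · rintro ⟨hx1, hx2⟩
        have hxI : x ∈ Ico (1/2:ℝ) (rr μ k) := ⟨hx1, by linarith⟩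
        refine ⟨hxI, ?_⟩
        have hprev : tentBit μ x (k-1) = tentBit μ (1/2) (k-1) :=
          prev_of_code hk ((IH1 x hx01).mpr hxI)
        rcases hsgn with ⟨hv, -⟩ | ⟨hv, -⟩
        · rw [bit_eval_lt hk ((claimA x hx1 hx2).1 hv), hprev, bit_eval_lt hk hv]
        · rw [bit_eval_gt hk ((claimA x hx1 hx2).2 hv), hprev, bit_eval_gt hk hv]
    · -- cbar-part
      intro x hx01
      rw [tentCode_succ, code_bar_succ, snoc_inj, IH2 x hx01, hrr]
      have hmir : (tentMap μ)^[k] x = (tentMap μ)^[k] (1 - x) := (iter_mirror hk x).symm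
      constructor
      · rintro ⟨hxI, hbit⟩
        refine ⟨?_, hxI.2⟩
        rcases lt_trichotomy x (1 - yy μ k) with h | h | h
        · exfalso
          have h1x : yy μ k < 1 - x := by linarith
          have h2x : 1 - x ≤ rr μ k := by linarith [hxI.1]
          have hprev : tentBit μ x (k-1) = !(tentBit μ (1/2) (k-1)) :=
            prevbar_of_code hk ((IH2 x hx01).mpr hxI)
          rcases hsgn with ⟨hv, -⟩ | ⟨hv, -⟩
          · rw [bit_eval_gt hk (by rw [hmir]; exact (claimB _ h1x h2x).1 hv), hprev,
              bit_eval_lt hk hv] at hbit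
            simp at hbit
          · rw [bit_eval_lt hk (by rw [hmir]; exact (claimB _ h1x h2x).2 hv), hprev,
              bit_eval_gt hk hv] at hbit
            simp at hbit
        · linarith
        · linarith
      · rintro ⟨hx1, hx2⟩
        have hxI : x ∈ Ico (1 - rr μ k) (1/2) := ⟨by linarith, hx2⟩
        refine ⟨hxI, ?_⟩
        have hprev : tentBit μ x (k-1) = !(tentBit μ (1/2) (k-1)) :=
          prevbar_of_code hk ((IH2 x hx01).mpr hxI)
        rcases eq_or_lt_of_le hx1 with h | h
        · rw [bit_eval_mid hk (by rw [hmir, ← h, show 1 - (1 - yy μ k) = yy μ k from by ring]; exact hy3), hBf]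
          simp
        · have h1x : 1/2 ≤ 1 - x := by linarith
          have h2x : 1 - x < yy μ k := by linarith
          rcases hsgn with ⟨hv, -⟩ | ⟨hv, -⟩
          · rw [bit_eval_lt hk (by rw [hmir]; exact (claimA _ h1x h2x).1 hv), hprev,
              bit_eval_lt hk hv]
          · rw [bit_eval_gt hk (by rw [hmir]; exact (claimA _ h1x h2x).2 hv), hprev,
              bit_eval_gt hk hv]
  · -- NO-CUT CASE
    have hrr : rr μ (k+1) = rr μ k := by rw [rr_succ μ hk, if_neg hc]
    have hprod : 0 ≤ ((tentMap μ)^[k] (1/2) - 1/2) * ((tentMap μ)^[k] (rr μ k) - 1/2) :=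
      not_lt.mp hc
    have hside : ((tentMap μ)^[k] (1/2 : ℝ) < 1/2 ∧ (tentMap μ)^[k] (rr μ k) < 1/2) ∨
        (1/2 < (tentMap μ)^[k] (1/2 : ℝ) ∧ 1/2 < (tentMap μ)^[k] (rr μ k)) := by
      rcases lt_or_gt_of_ne hvk with h | h
      · left
        refine ⟨h, ?_⟩
        rcases lt_or_gt_of_ne hwk with h2 | h2
        · exact h2
        · exfalso; nlinarith
      · right
        refine ⟨h, ?_⟩
        rcases lt_or_gt_of_ne hwk with h2 | h2
        · exfalso; nlinarith
        · exact h2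
    have claimC : ∀ t, 1/2 ≤ t → t ≤ rr μ k →
        (((tentMap μ)^[k] (1/2 : ℝ) < 1/2 → (tentMap μ)^[k] t < 1/2) ∧
         (1/2 < (tentMap μ)^[k] (1/2 : ℝ) → 1/2 < (tentMap μ)^[k] t)) := by
      intro t ht1 ht2
      have haff := hsl t ⟨ht1, ht2⟩
      rcases ha0.lt_or_gt with hn | hp
      · have hb : (tentMap μ)^[k] (rr μ k) ≤ (tentMap μ)^[k] t ∧
            (tentMap μ)^[k] t ≤ (tentMap μ)^[k] (1/2) := by
          constructor
          · rw [haff, hwaff]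
            nlinarith [mul_le_mul_of_nonpos_left (show t - 1/2 ≤ rr μ k - 1/2 by linarith) hn.le]
          · rw [haff]
            nlinarith [mul_nonpos_iff.mpr (Or.inr ⟨hn.le, show (0:ℝ) ≤ t - 1/2 by linarith⟩)]
        rcases hside with ⟨h1, h2⟩ | ⟨h1, h2⟩
        · exact ⟨fun _ => by linarith [hb.2], fun h => absurd h (by linarith)⟩
        · exact ⟨fun h => absurd h (by linarith), fun _ => by linarith [hb.1]⟩
      · have hb : (tentMap μ)^[k] (1/2) ≤ (tentMap μ)^[k] t ∧
            (tentMap μ)^[k] t ≤ (tentMap μ)^[k] (rr μ k) := by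
          constructor
          · rw [haff]
            nlinarith [mul_nonneg hp.le (show (0:ℝ) ≤ t - 1/2 by linarith)]
          · rw [haff, hwaff]
            nlinarith [mul_le_mul_of_nonneg_left (show t - 1/2 ≤ rr μ k - 1/2 by linarith) hp.le]
        rcases hside with ⟨h1, h2⟩ | ⟨h1, h2⟩
        · exact ⟨fun _ => by linarith [hb.2], fun h => absurd h (by linarith)⟩
        · exact ⟨fun h => absurd h (by linarith), fun _ => by linarith [hb.1]⟩
    constructor
    · intro x hx01
      rw [tentCode_succ, tentCode_succ, snoc_inj, IH1 x hx01, hrr]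
      constructor
      · rintro ⟨hxI, -⟩; exact hxI
      · intro hxI
        refine ⟨hxI, ?_⟩
        have hprev : tentBit μ x (k-1) = tentBit μ (1/2) (k-1) :=
          prev_of_code hk ((IH1 x hx01).mpr hxI)
        rcases hside with ⟨hv, -⟩ | ⟨hv, -⟩
        · rw [bit_eval_lt hk ((claimC x hxI.1 hxI.2.le).1 hv), hprev, bit_eval_lt hk hv]
        · rw [bit_eval_gt hk ((claimC x hxI.1 hxI.2.le).2 hv), hprev, bit_eval_gt hk hv]
    · intro x hx01
      rw [tentCode_succ, code_bar_succ, snoc_inj, IH2 x hx01, hrr]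
      have hmir : (tentMap μ)^[k] x = (tentMap μ)^[k] (1 - x) := (iter_mirror hk x).symm
      constructor
      · rintro ⟨hxI, -⟩; exact hxI
      · intro hxI
        refine ⟨hxI, ?_⟩
        have hprev : tentBit μ x (k-1) = !(tentBit μ (1/2) (k-1)) :=
          prevbar_of_code hk ((IH2 x hx01).mpr hxI)
        have h1x : 1/2 ≤ 1 - x := by linarith [hxI.2]
        have h2x : 1 - x ≤ rr μ k := by linarith [hxI.1]
        rcases hside with ⟨hv, -⟩ | ⟨hv, -⟩
        · rw [bit_eval_lt hk (by rw [hmir]; exact (claimC _ h1x h2x).1 hv), hprev,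
            bit_eval_lt hk hv]
        · rw [bit_eval_gt hk (by rw [hmir]; exact (claimC _ h1x h2x).2 hv), hprev,
            bit_eval_gt hk hv]

end Everything7
section Everything8
attribute [local instance 10] Classical.propDecidable
open Set

variable {μ : ℝ}

lemma code_char (hμ1 : 1 < μ) (N : ℕ)
    (hcrit' : ∀ i, 1 ≤ i → i < N → (tentMap μ)^[i] (1/2 : ℝ) ≠ 1/2) :
    ∀ k, 1 ≤ k → k ≤ N →
    (∀ x ∈ Ico (0:ℝ) 1, (tentCode μ k x = tentCode μ k (1/2) ↔ x ∈ Ico (1/2) (rr μ k))) ∧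
    (∀ x ∈ Ico (0:ℝ) 1, (tentCode μ k x = (tentCode μ k (1/2)).map (fun b => !b)
      ↔ x ∈ Ico (1 - rr μ k) (1/2))) := by
  intro k hk1
  induction k, hk1 using Nat.le_induction with
  | base =>
    intro h1N
    have hr1 : rr μ 1 = 1 := rfl
    constructor
    · intro x hx
      constructor
      · intro hcode
        refine ⟨?_, by rw [hr1]; exact hx.2⟩
        by_contra hx2
        push_neg at hx2
        rw [code_one, code_one, bit0_half, tentBit_zero, if_neg (not_le.mpr hx2)] at hcode
        simp at hcode
      · intro hxI
        rw [code_one, code_one, bit0_half, tentBit_zero, if_pos hxI.1]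
    · intro x hx
      constructor
      · intro hcode
        refine ⟨by rw [hr1]; simpa using hx.1, ?_⟩
        by_contra hx2
        push_neg at hx2
        rw [code_one, code_one, bit0_half, tentBit_zero, if_pos hx2] at hcode
        simp at hcode
      · intro hxI
        rw [code_one, code_one, bit0_half, tentBit_zero, if_neg (not_le.mpr hxI.2)]
        simp
  | succ k hk ih =>
    intro hk1N
    have prev := ih (by omega)
    have hvk : (tentMap μ)^[k] (1/2 : ℝ) ≠ 1/2 := hcrit' k hk (by omega)
    have hwk : (tentMap μ)^[k] (rr μ k) ≠ 1/2 := by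
      rcases Nat.lt_or_ge k 2 with h2 | h2
      · have : k = 1 := by omega
        rw [this, show rr μ 1 = 1 from rfl, Function.iterate_one, tent_one]
        norm_num
      · have pin : Pin μ k := pin_any hμ1 h2
        have e1 := pin.Spos
        have e2 := pin.Slt
        rw [pin.rval]
        exact hcrit' _ (by omega) (by omega)
    exact code_step hμ1 hk hvk hwk
      (fun hc => bit_false hμ1 N hcrit' k hk (by omega) hc) prev.1 prev.2

set_option maxHeartbeats 1000000 in
lemma split_char (hμ1 : 1 < μ) {k : ℕ} (hk : 1 ≤ k) (hc : Cut μ k)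
    (hBf : tentBit μ (1/2) k = false)
    (IH1 : ∀ x ∈ Ico (0:ℝ) 1, (tentCode μ k x = tentCode μ k (1/2) ↔ x ∈ Ico (1/2) (rr μ k))) :
    ∀ x ∈ Ico (0:ℝ) 1, (tentCode μ (k+1) x = tentCode μ k (1/2) ++ [true]
      ↔ x ∈ Ico (yy μ k) (rr μ k)) := by
  have geoK : Geo μ k := geo_any hμ1 hk
  obtain ⟨a, ha, hsl⟩ := geoK.slope
  have ha0 : a ≠ 0 := apos hμ1 ha
  have hR1 : 1/2 < rr μ k := geoK.h1
  obtain ⟨hy1, hy2, hy3⟩ := cut_data hμ1 geoK hc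
  have hvk : (tentMap μ)^[k] (1/2 : ℝ) ≠ 1/2 := (cut_ne hc).1
  have hay : a * (yy μ k - 1/2) = 1/2 - (tentMap μ)^[k] (1/2) := by
    have := hsl (yy μ k) ⟨hy1.le, hy2.le⟩
    rw [hy3] at this
    linarith
  have hsgn : ((tentMap μ)^[k] (1/2 : ℝ) < 1/2 ∧ 0 < a) ∨
      (1/2 < (tentMap μ)^[k] (1/2 : ℝ) ∧ a < 0) := by
    rcases lt_or_gt_of_ne hvk with h | h
    · left
      refine ⟨h, ?_⟩
      rcases ha0.lt_or_gt with hn | hp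
      · exfalso; nlinarith [mul_neg_of_neg_of_pos hn (show (0:ℝ) < yy μ k - 1/2 by linarith)]
      · exact hp
    · right
      refine ⟨h, ?_⟩
      rcases ha0.lt_or_gt with hn | hp
      · exact hn
      · exfalso; nlinarith [mul_pos hp (show (0:ℝ) < yy μ k - 1/2 by linarith)]
  have claimA : ∀ t, 1/2 ≤ t → t < yy μ k →
      (((tentMap μ)^[k] (1/2 : ℝ) < 1/2 → (tentMap μ)^[k] t < 1/2) ∧
       (1/2 < (tentMap μ)^[k] (1/2 : ℝ) → 1/2 < (tentMap μ)^[k] t)) := by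
    intro t ht1 ht2
    have haff := hsl t ⟨ht1, by linarith⟩
    rcases hsgn with ⟨hv, hp⟩ | ⟨hv, hn⟩
    · exact ⟨fun _ => by nlinarith [mul_lt_mul_of_pos_left (show t - 1/2 < yy μ k - 1/2 by linarith) hp],
        fun h => absurd h (by linarith)⟩
    · exact ⟨fun h => absurd h (by linarith),
        fun _ => by nlinarith [mul_lt_mul_of_neg_left (show t - 1/2 < yy μ k - 1/2 by linarith) hn]⟩
  have claimB : ∀ t, yy μ k < t → t ≤ rr μ k →
      (((tentMap μ)^[k] (1/2 : ℝ) < 1/2 → 1/2 < (tentMap μ)^[k] t) ∧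
       (1/2 < (tentMap μ)^[k] (1/2 : ℝ) → (tentMap μ)^[k] t < 1/2)) := by
    intro t ht1 ht2
    have haff := hsl t ⟨by linarith, ht2⟩
    rcases hsgn with ⟨hv, hp⟩ | ⟨hv, hn⟩
    · exact ⟨fun _ => by nlinarith [mul_lt_mul_of_pos_left (show yy μ k - 1/2 < t - 1/2 by linarith) hp],
        fun h => absurd h (by linarith)⟩
    · exact ⟨fun h => absurd h (by linarith),
        fun _ => by nlinarith [mul_lt_mul_of_neg_left (show yy μ k - 1/2 < t - 1/2 by linarith) hn]⟩
  intro x hx01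
  rw [tentCode_succ, snoc_inj]
  constructor
  · rintro ⟨hcode, hbit⟩
    have hxI : x ∈ Ico (1/2:ℝ) (rr μ k) := (IH1 x hx01).mp hcode
    refine ⟨?_, hxI.2⟩
    by_contra hxy
    push_neg at hxy
    have hprev : tentBit μ x (k-1) = tentBit μ (1/2) (k-1) := prev_of_code hk hcode
    rcases hsgn with ⟨hv, -⟩ | ⟨hv, -⟩
    · rw [bit_eval_lt hk ((claimA x hxI.1 hxy).1 hv), hprev, ← bit_eval_lt hk hv, hBf] at hbit
      simp at hbit
    · rw [bit_eval_gt hk ((claimA x hxI.1 hxy).2 hv), hprev] at hbit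
      rw [bit_eval_gt hk hv] at hBf
      rw [hBf] at hbit
      simp at hbit
  · rintro ⟨hx1, hx2⟩
    have hxI : x ∈ Ico (1/2:ℝ) (rr μ k) := ⟨by linarith, hx2⟩
    have hcode : tentCode μ k x = tentCode μ k (1/2) := (IH1 x hx01).mpr hxI
    refine ⟨hcode, ?_⟩
    have hprev : tentBit μ x (k-1) = tentBit μ (1/2) (k-1) := prev_of_code hk hcode
    rcases eq_or_lt_of_le hx1 with h | h
    · exact bit_eval_mid hk (by rw [← h]; exact hy3)
    · rcases hsgn with ⟨hv, -⟩ | ⟨hv, -⟩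
      · rw [bit_eval_gt hk ((claimB x h hx2.le).1 hv), hprev]
        rw [bit_eval_lt hk hv] at hBf
        rw [hBf]
        rfl
      · rw [bit_eval_lt hk ((claimB x h hx2.le).2 hv), hprev]
        rw [bit_eval_gt hk hv] at hBf
        simp only [Bool.not_eq_false'] at hBf
        rw [hBf]

lemma image_Ico_affine {F : ℝ → ℝ} {A s t : ℝ} (hst : s < t)
    (haff : ∀ x ∈ Icc s t, F x = F s + A*(x - s)) :
    (0 < A → F '' (Ico s t) = Ico (F s) (F s + A*(t - s))) ∧
    (A < 0 → F '' (Ico s t) = Ioc (F s + A*(t-s)) (F s)) := by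
  constructor
  · intro hA
    ext z
    constructor
    · rintro ⟨x, hx, rfl⟩
      rw [haff x ⟨hx.1, hx.2.le⟩]
      constructor
      · nlinarith [mul_nonneg hA.le (show (0:ℝ) ≤ x - s by linarith [hx.1])]
      · nlinarith [mul_lt_mul_of_pos_left (show x - s < t - s by linarith [hx.2]) hA]
    · rintro ⟨hz1, hz2⟩
      refine ⟨s + (z - F s)/A, ⟨by nlinarith [div_nonneg (by linarith : (0:ℝ) ≤ z - F s) hA.le], ?_⟩, ?_⟩
      · rw [show s + (z - F s)/A < t ↔ (z - F s)/A < t - s from by constructor <;> intro <;> linarith,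
          div_lt_iff₀ hA]
        nlinarith
      · have hmem : s + (z - F s)/A ∈ Icc s t := by
          constructor
          · nlinarith [div_nonneg (by linarith : (0:ℝ) ≤ z - F s) hA.le]
          · have : (z - F s)/A ≤ t - s := by
              rw [div_le_iff₀ hA]; nlinarith
            linarith
        rw [haff _ hmem, show s + (z - F s)/A - s = (z - F s)/A from by ring]
        field_simp
        ring
  · intro hA
    ext z
    constructor
    · rintro ⟨x, hx, rfl⟩
      rw [haff x ⟨hx.1, hx.2.le⟩]
      constructor
      · nlinarith [mul_lt_mul_of_neg_left (show x - s < t - s by linarith [hx.2]) hA]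
      · nlinarith [mul_nonpos_iff.mpr (Or.inr ⟨hA.le, show (0:ℝ) ≤ x - s by linarith [hx.1]⟩)]
    · rintro ⟨hz1, hz2⟩
      refine ⟨s + (z - F s)/A, ⟨?_, ?_⟩, ?_⟩
      · have : (0:ℝ) ≤ (z - F s)/A := div_nonneg_iff.mpr (Or.inr ⟨by linarith, hA.le⟩)
        linarith
      · have : (z - F s)/A < t - s := by
          rw [div_lt_iff_of_neg hA]; nlinarith
        linarith
      · have hmem : s + (z - F s)/A ∈ Icc s t := by
          constructor
          · have : (0:ℝ) ≤ (z - F s)/A := div_nonneg_iff.mpr (Or.inr ⟨by linarith, hA.le⟩)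
            linarith
          · have : (z - F s)/A ≤ t - s := by
              rw [div_le_iff_of_neg hA]; nlinarith
            linarith
        rw [haff _ hmem, show s + (z - F s)/A - s = (z - F s)/A from by ring,
          ← mul_div_assoc, mul_div_cancel_left₀ _ (ne_of_lt hA)]
        ring

end Everything8
section Everything9
attribute [local instance 10] Classical.propDecidable
open Set

set_option maxHeartbeats 4000000 in
theorem aux_exists_back_transition (μ : ℝ) (hμ1 : 1 < μ) (hμ2 : μ < 2)
    (n : ℕ) (hn : 1 ≤ n)
    (hcrit : ∀ i : ℕ, 1 ≤ i → i ≤ 2*n - 1 → (tentMap μ)^[i] (1/2) ≠ 1/2) :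
    ∃ k : ℕ, n + 1 ≤ k ∧ k ≤ 2*n ∧
      ∃ (b : Bool) (w : List Bool),
        w ∈ tentLang μ k ∧ segType μ k w = Iseg μ k ∧
        w ++ [b] ∈ tentLang μ (k+1) ∧
        ∃ k' : ℕ, 1 ≤ k' ∧ 2 * k' ≤ k ∧
          segType μ (k+1) (w ++ [b]) = Isegbar μ (k'+1) := by
  have hcrit' : ∀ i, 1 ≤ i → i < 2*n → (tentMap μ)^[i] (1/2 : ℝ) ≠ 1/2 :=
    fun i h1 h2 => hcrit i h1 (by omega)
  -- properties of the last cut before n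
  have lcP : ∀ m, 1 ≤ m → (1 ≤ lc μ m ∧ lc μ m ≤ m ∧ Cut μ (lc μ m) ∧
      ∀ j, lc μ m < j → j ≤ m → ¬Cut μ j) := by
    intro m hm
    induction m with
    | zero => omega
    | succ m ih =>
      rcases Nat.lt_or_ge m 1 with h | h
      · have hm0 : m = 0 := by omega
        subst hm0
        rw [lc_succ, if_pos (cut_one hμ1)]
        exact ⟨le_rfl, le_rfl, cut_one hμ1, fun j h1 h2 => by omega⟩
      · obtain ⟨i1, i2, i3, i4⟩ := ih h
        by_cases hcm : Cut μ (m+1)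
        · rw [lc_succ, if_pos hcm]
          exact ⟨by omega, le_rfl, hcm, fun j h1 h2 => by omega⟩
        · rw [lc_succ, if_neg hcm]
          refine ⟨i1, by omega, i3, fun j h1 h2 => ?_⟩
          rcases Nat.lt_or_ge j (m+1) with hj | hj
          · exact i4 j h1 (by omega)
          · have : j = m+1 := by omega
            rw [this]; exact hcm
  obtain ⟨hS1, hSn, hScut, hSno⟩ := lcP n hn
  -- the first cut after S
  have hex : ∃ j, lc μ n < j ∧ Cut μ j := by
    by_cases hno : ∀ i, lc μ n < i → i < 2*(lc μ n) → ¬Cut μ i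
    · exact ⟨2*(lc μ n), by omega, gap_lemma hμ1 hS1 hScut hno⟩
    · push_neg at hno
      obtain ⟨i, h1, h2, h3⟩ := hno
      exact ⟨i, h1, h3⟩
  obtain ⟨hSk, hkc⟩ : lc μ n < Nat.find hex ∧ Cut μ (Nat.find hex) := Nat.find_spec hex
  set k := Nat.find hex with hkdef
  have hkmin : ∀ j, j < k → ¬(lc μ n < j ∧ Cut μ j) := fun j hj => Nat.find_min hex hj
  have hk2S : k ≤ 2*(lc μ n) := by
    by_cases hno : ∀ i, lc μ n < i → i < 2*(lc μ n) → ¬Cut μ i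
    · exact Nat.find_min' hex ⟨by omega, gap_lemma hμ1 hS1 hScut hno⟩
    · push_neg at hno
      obtain ⟨i, h1, h2, h3⟩ := hno
      exact le_trans (Nat.find_min' hex ⟨h1, h3⟩) (by omega)
  have hkn : n < k := by
    by_contra h
    push_neg at h
    exact hSno k hSk h hkc
  have hk2n : k ≤ 2*n := by omega
  have hk2 : 2 ≤ k := by omega
  have hlck : lc μ (k-1) = lc μ n := by
    apply lc_stable hS1 hScut (fun i h1 h2 => ?_) (by omega)
    rcases Nat.lt_or_ge i (n+1) with h | h
    · exact hSno i h1 (by omega)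
    · intro hci
      exact hkmin i (by omega) ⟨h1, hci⟩
  have hk'1 : 1 ≤ k - lc μ n := by omega
  have h2k' : 2*(k - lc μ n) ≤ k := by omega
  have hck' : Cut μ (k - lc μ n) := by
    have := diff_cut hμ1 hk2 hkc (fun i h1 h2 => hcrit' i h1 (by omega))
    rw [hlck] at this
    exact this
  -- geometry at k and k'
  have geoK : Geo μ k := geo_any hμ1 (by omega)
  obtain ⟨hy1, hy2, hy3⟩ := cut_data hμ1 geoK hkc
  have pinK : Pin μ k := pin_any hμ1 hk2
  have hrvk : (tentMap μ)^[k] (rr μ k) = (tentMap μ)^[k - lc μ n] (1/2) := by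
    have := pinK.rval
    rw [hlck] at this
    exact this
  have hrk1 : rr μ k < 1 := pinK.hlt1
  have hBf : tentBit μ (1/2) k = false :=
    bit_false hμ1 (2*n) hcrit' k (by omega) (by omega) hkc
  have CD := code_char hμ1 (2*n) hcrit'
  have CDk := (CD k (by omega) (by omega)).1
  have CDk' := (CD ((k - lc μ n)+1) (by omega) (by omega)).2
  have SP := split_char hμ1 (show 1 ≤ k by omega) hkc hBf CDk
  have geoK' : Geo μ (k - lc μ n) := geo_any hμ1 hk'1
  obtain ⟨hz1, hz2, hz3⟩ := cut_data hμ1 geoK' hck'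
  have hrk' : rr μ ((k - lc μ n)+1) = yy μ (k - lc μ n) := by
    rw [rr_succ μ hk'1, if_pos hck']
  have hvk' : (tentMap μ)^[k - lc μ n] (1/2 : ℝ) ≠ 1/2 := hcrit' _ (by omega) (by omega)
  have geoK1 : Geo μ ((k - lc μ n)+1) := geo_any hμ1 (by omega)
  refine ⟨k, by omega, hk2n, true, tentCode μ k (1/2),
    ⟨1/2, ⟨by norm_num, by norm_num⟩, rfl⟩, rfl, ?_, k - lc μ n, hk'1, h2k', ?_⟩
  · -- language membership
    refine ⟨yy μ k, ⟨by linarith, by linarith⟩, ?_⟩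
    rw [tentCode_succ]
    exact snoc_inj.mpr ⟨(CDk (yy μ k) ⟨by linarith, by linarith⟩).mpr ⟨hy1.le, hy2⟩,
      bit_eval_mid (show 1 ≤ k by omega) hy3⟩
  · -- the main set equality
    have hIm1 : segType μ (k+1) (tentCode μ k (1/2) ++ [true])
        = (tentMap μ)^[k+1] '' (Ico (yy μ k) (rr μ k)) := by
      ext z
      simp only [segType, mem_setOf_eq, mem_image]
      constructor
      · rintro ⟨x, hx01, hcode, hfx⟩
        exact ⟨x, (SP x hx01).mp hcode, hfx⟩
      · rintro ⟨x, hxI, hfx⟩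
        have hx01 : x ∈ Ico (0:ℝ) 1 := ⟨by linarith [hxI.1], by linarith [hxI.2]⟩
        exact ⟨x, hx01, (SP x hx01).mpr hxI, hfx⟩
    have hIm2 : Isegbar μ ((k - lc μ n)+1)
        = (tentMap μ)^[(k - lc μ n)+1] '' (Ico (1 - yy μ (k - lc μ n)) (1/2)) := by
      have hge0 : (0:ℝ) ≤ 1 - rr μ ((k - lc μ n)+1) := by linarith [geoK1.h2]
      rw [hrk'] at hge0
      ext z
      simp only [Isegbar, segType, mem_setOf_eq, mem_image]
      constructor
      · rintro ⟨x, hx01, hcode, hfx⟩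
        have := (CDk' x hx01).mp hcode
        rw [hrk'] at this
        exact ⟨x, this, hfx⟩
      · rintro ⟨x, hxI, hfx⟩
        have hx01 : x ∈ Ico (0:ℝ) 1 := ⟨by linarith [hxI.1, hge0], by linarith [hxI.2]⟩
        refine ⟨x, hx01, (CDk' x hx01).mpr ?_, hfx⟩
        rw [hrk']
        exact hxI
    rw [hIm1, hIm2, Function.iterate_succ' (tentMap μ) k,
      Function.iterate_succ' (tentMap μ) (k - lc μ n), Set.image_comp, Set.image_comp]
    congr 1
    -- image of f^[k] on [y, rr k) equals image of f^[k'] on [1-y', 1/2)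
    obtain ⟨a, ha, hsl⟩ := geoK.slope
    obtain ⟨a', ha', hsl'⟩ := geoK'.slope
    have ha0 : a ≠ 0 := apos hμ1 ha
    have ha0' : a' ≠ 0 := apos hμ1 ha'
    have eYk := hsl (yy μ k) ⟨hy1.le, hy2.le⟩
    rw [hy3] at eYk
    have eTk := hsl (rr μ k) ⟨geoK.h1.le, le_rfl⟩
    rw [hrvk] at eTk
    have eYk' := hsl' (yy μ (k - lc μ n)) ⟨hz1.le, hz2.le⟩
    rw [hz3] at eYk' 
    have haffK : ∀ x ∈ Icc (yy μ k) (rr μ k),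
        (tentMap μ)^[k] x = (tentMap μ)^[k] (yy μ k) + a*(x - yy μ k) := by
      intro x hx
      rw [hsl x ⟨by linarith [hx.1], hx.2⟩, hy3]
      linear_combination -eYk
    have haffK' : ∀ x ∈ Icc (1 - yy μ (k - lc μ n)) (1/2 : ℝ),
        (tentMap μ)^[k - lc μ n] x
          = (tentMap μ)^[k - lc μ n] (1 - yy μ (k - lc μ n))
            + (-a')*(x - (1 - yy μ (k - lc μ n))) := by
      intro x hx
      have hm1 : (tentMap μ)^[k - lc μ n] x = (tentMap μ)^[k - lc μ n] (1 - x) :=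
        (iter_mirror hk'1 x).symm
      have hm2 : (tentMap μ)^[k - lc μ n] (1 - yy μ (k - lc μ n)) = 1/2 := by
        rw [iter_mirror hk'1]; exact hz3
      rw [hm1, hm2, hsl' (1 - x) ⟨by linarith [hx.2], by linarith [hx.1, hz2]⟩]
      linear_combination -eYk'
    have imA := image_Ico_affine hy2 haffK
    have imB := image_Ico_affine (show 1 - yy μ (k - lc μ n) < 1/2 by linarith) haffK'
    have hFs1 : (tentMap μ)^[k] (yy μ k) = 1/2 := hy3
    have hFs2 : (tentMap μ)^[k - lc μ n] (1 - yy μ (k - lc μ n)) = 1/2 := by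
      rw [iter_mirror hk'1]; exact hz3
    have hEndA : (1/2 : ℝ) + a*(rr μ k - yy μ k)
        = (tentMap μ)^[k - lc μ n] (1/2) := by
      linear_combination eYk - eTk
    have hEndB : (1/2 : ℝ) + (-a')*(1/2 - (1 - yy μ (k - lc μ n)))
        = (tentMap μ)^[k - lc μ n] (1/2) := by
      linear_combination eYk'
    rcases lt_or_gt_of_ne hvk' with hv | hv
    · -- v' < 1/2 : both slopes negative
      have hA : a < 0 := by
        rcases ha0.lt_or_gt with hn' | hp'
        · exact hn'
        · exfalso
          nlinarith [mul_pos hp' (show (0:ℝ) < rr μ k - yy μ k by linarith), hEndA, hFs1]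
      have hB : -a' < 0 := by
        rcases ha0'.lt_or_gt with hn' | hp'
        · exfalso
          nlinarith [mul_pos (show (0:ℝ) < -a' by linarith)
            (show (0:ℝ) < 1/2 - (1 - yy μ (k - lc μ n)) by linarith), hEndB, hFs2]
        · linarith
      rw [imA.2 hA, imB.2 hB, hFs1, hFs2, hEndA, hEndB]
    · -- v' > 1/2 : both slopes positive
      have hA : 0 < a := by
        rcases ha0.lt_or_gt with hn' | hp'
        · exfalso
          nlinarith [mul_neg_of_neg_of_pos hn' (show (0:ℝ) < rr μ k - yy μ k by linarith),
            hEndA, hFs1]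
        · exact hp'
      have hB : 0 < -a' := by
        rcases ha0'.lt_or_gt with hn' | hp'
        · linarith
        · exfalso
          nlinarith [mul_neg_of_neg_of_pos (show -a' < 0 by linarith)
            (show (0:ℝ) < 1/2 - (1 - yy μ (k - lc μ n)) by linarith), hEndB, hFs2]
      rw [imA.1 hA, imB.1 hB, hFs1, hFs2, hEndA, hEndB]

end Everything9

/-- between levels `n+1` and `2n` there is at least one transition
decreasing the level to at most (roughly) a half. -/
theorem exists_back_transition (μ : ℝ) (hμ1 : 1 < μ) (hμ2 : μ < 2)
    (n : ℕ) (hn : 1 ≤ n)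
    (hcrit : ∀ i : ℕ, 1 ≤ i → i ≤ 2*n - 1 → (tentMap μ)^[i] (1/2) ≠ 1/2) :
    ∃ k : ℕ, n + 1 ≤ k ∧ k ≤ 2*n ∧
      ∃ (b : Bool) (w : List Bool),
        w ∈ tentLang μ k ∧ segType μ k w = Iseg μ k ∧
        w ++ [b] ∈ tentLang μ (k+1) ∧
        ∃ k' : ℕ, 1 ≤ k' ∧ 2 * k' ≤ k ∧
          segType μ (k+1) (w ++ [b]) = Isegbar μ (k'+1) :=
  aux_exists_back_transition μ hμ1 hμ2 n hn hcrit
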